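/- arXiv:2101.11690 — 2 statements merged into one kernel-verified Lean document; each statement's English description precedes it below -/
import Mathlib

section
/- Let n ≥ 1, θ ∈ (0,1/2). There exists a constant c = c(n,θ) > 0 such that for any pair of n-dimensional dyadic cubes K₁, K₂ ⊂ Q₁ with common sidelength 2^{−k} satisfying dist(K₁, K₂) < (3√n + 1)·2^{−k}, the diagonal ball 𝓑_r(z) with z = (x+y)/2 (x,y the centers of K₁,K₂) and r = (5√n + 1)·2^{−k} satisfies K₁ × K₂ ⊂ 𝓑_r(z) and μ(𝓑_r(z)) ≤ c (5√n + 1)^{2n} μ(K₁ × K₂). -/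
open MeasureTheory Metric ENNReal

/-- The measure `μ` on `ℝⁿ × ℝⁿ` with density `|x - y|^{-(n - 2θ)}`. -/
noncomputable def muMeas (n : ℕ) (θ : ℝ) :
    Measure (EuclideanSpace ℝ (Fin n) × EuclideanSpace ℝ (Fin n)) :=
  volume.withDensity fun p => ENNReal.ofReal (dist p.1 p.2 ^ (-((n : ℝ) - 2 * θ)))

/-- The dyadic subcube of the unit cube `Q₁ = [0,1]ⁿ` of generation `k`
with lower corner `a/2^k`. -/
def dyadicCube (n k : ℕ) (a : Fin n → ℕ) : Set (EuclideanSpace ℝ (Fin n)) :=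
  {x | ∀ t : Fin n, (a t : ℝ) / 2 ^ k ≤ x t ∧ x t ≤ ((a t : ℝ) + 1) / 2 ^ k}

/-- The distance between two sets. -/
noncomputable def setDist {E : Type*} [PseudoMetricSpace E] (A B : Set E) : ℝ :=
  sInf {d | ∃ a ∈ A, ∃ b ∈ B, d = dist a b}

lemma measurableSet_dyadicCube (n k : ℕ) (a : Fin n → ℕ) :
    MeasurableSet (dyadicCube n k a) := by
  have : dyadicCube n k a = ⋂ t : Fin n,
      {x : EuclideanSpace ℝ (Fin n) | (a t : ℝ) / 2 ^ k ≤ x t ∧ x t ≤ ((a t : ℝ) + 1) / 2 ^ k} := by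
    ext x; simp [dyadicCube, Set.mem_iInter]
  rw [this]
  refine MeasurableSet.iInter fun t => MeasurableSet.inter ?_ ?_
  · exact measurableSet_le measurable_const ((measurable_pi_apply t).comp (WithLp.measurable_ofLp 2 (Fin n → ℝ)))
  · exact measurableSet_le ((measurable_pi_apply t).comp (WithLp.measurable_ofLp 2 (Fin n → ℝ))) measurable_const

lemma volume_dyadicCube (n k : ℕ) (a : Fin n → ℕ) :
    volume (dyadicCube n k a) = ENNReal.ofReal ((1 / 2 ^ k : ℝ) ^ n) := by
  have hEq : dyadicCube n k a = (MeasurableEquiv.toLp 2 (Fin n → ℝ)).symm ⁻¹'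
      Set.univ.pi (fun t => Set.Icc ((a t : ℝ) / 2 ^ k) (((a t : ℝ) + 1) / 2 ^ k)) := by
    ext x
    simp only [dyadicCube, Set.mem_setOf_eq, Set.mem_preimage, Set.mem_pi, Set.mem_univ,
      true_implies, Set.mem_Icc]
    rfl
  rw [hEq, (EuclideanSpace.volume_preserving_symm_measurableEquiv_toLp (Fin n)).measure_preimage
    ((MeasurableSet.univ_pi fun t => measurableSet_Icc).nullMeasurableSet)]
  rw [volume_pi_pi]
  have : ∀ t : Fin n, volume (Set.Icc ((a t : ℝ) / 2 ^ k) (((a t : ℝ) + 1) / 2 ^ k))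
      = ENNReal.ofReal (1 / 2 ^ k : ℝ) := by
    intro t
    rw [Real.volume_Icc]
    congr 1
    ring
  simp only [this, Finset.prod_const, Finset.card_univ, Fintype.card_fin]
  rw [ENNReal.ofReal_pow (by positivity)]

lemma dist_le_of_coords (n : ℕ) (u v : EuclideanSpace ℝ (Fin n)) {M : ℝ} (hM : 0 ≤ M)
    (h : ∀ t, |u t - v t| ≤ M) : dist u v ≤ Real.sqrt n * M := by
  rw [EuclideanSpace.dist_eq]
  have h1 : ∑ t, dist (u t) (v t) ^ 2 ≤ (n : ℝ) * M ^ 2 := by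
    calc ∑ t, dist (u t) (v t) ^ 2 ≤ ∑ _t : Fin n, M ^ 2 := by
          refine Finset.sum_le_sum fun t _ => ?_
          have := h t
          rw [Real.dist_eq]
          nlinarith [abs_nonneg (u t - v t)]
      _ = (n : ℝ) * M ^ 2 := by rw [Finset.sum_const, Finset.card_univ, Fintype.card_fin, nsmul_eq_mul]
  calc Real.sqrt (∑ t, dist (u t) (v t) ^ 2) ≤ Real.sqrt ((n : ℝ) * M ^ 2) :=
        Real.sqrt_le_sqrt h1
    _ = Real.sqrt n * M := by
        rw [Real.sqrt_mul (Nat.cast_nonneg n), Real.sqrt_sq hM]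

lemma strip_bound (n : ℕ) (hn : 1 ≤ n) (z : EuclideanSpace ℝ (Fin n)) {δ ρ : ℝ}
    (hδ : 0 ≤ δ) (hρ : 0 ≤ ρ) :
    volume {p : EuclideanSpace ℝ (Fin n) × EuclideanSpace ℝ (Fin n) |
        dist p.1 p.2 < δ ∧ p.2 ∈ ball z ρ} ≤
      (ENNReal.ofReal (δ ^ n) * volume (ball (0 : EuclideanSpace ℝ (Fin n)) 1)) *
        (ENNReal.ofReal (ρ ^ n) * volume (ball (0 : EuclideanSpace ℝ (Fin n)) 1)) := by
  haveI : Nontrivial (EuclideanSpace ℝ (Fin n)) :=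
    Module.nontrivial_of_finrank_pos (R := ℝ) (by rw [finrank_euclideanSpace_fin]; omega)
  have hsub : {p : (EuclideanSpace ℝ (Fin n)) × (EuclideanSpace ℝ (Fin n)) | dist p.1 p.2 < δ ∧ p.2 ∈ ball z ρ} ⊆
      (fun p : (EuclideanSpace ℝ (Fin n)) × (EuclideanSpace ℝ (Fin n)) => (p.1 - p.2, p.2)) ⁻¹' ((ball (0 : EuclideanSpace ℝ (Fin n)) δ) ×ˢ (ball z ρ)) := by
    rintro ⟨x, y⟩ ⟨h1, h2⟩
    refine ⟨?_, h2⟩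
    simpa [mem_ball_zero_iff, ← dist_eq_norm] using h1
  calc volume {p : (EuclideanSpace ℝ (Fin n)) × (EuclideanSpace ℝ (Fin n)) | dist p.1 p.2 < δ ∧ p.2 ∈ ball z ρ}
      ≤ volume ((fun p : (EuclideanSpace ℝ (Fin n)) × (EuclideanSpace ℝ (Fin n)) => (p.1 - p.2, p.2)) ⁻¹' ((ball (0 : EuclideanSpace ℝ (Fin n)) δ) ×ˢ (ball z ρ))) :=
        measure_mono hsub
    _ = (volume : Measure ((EuclideanSpace ℝ (Fin n)) × (EuclideanSpace ℝ (Fin n)))) ((ball (0 : EuclideanSpace ℝ (Fin n)) δ) ×ˢ (ball z ρ)) := by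
        rw [Measure.volume_eq_prod]
        exact (measurePreserving_sub_prod volume volume).measure_preimage
          (measurableSet_ball.prod measurableSet_ball).nullMeasurableSet
    _ = volume (ball (0 : EuclideanSpace ℝ (Fin n)) δ) * volume (ball z ρ) := by
        rw [Measure.volume_eq_prod, Measure.prod_prod]
    _ = (ENNReal.ofReal (δ ^ n) * volume (ball (0 : EuclideanSpace ℝ (Fin n)) 1)) *
        (ENNReal.ofReal (ρ ^ n) * volume (ball (0 : EuclideanSpace ℝ (Fin n)) 1)) := by
        rw [Measure.addHaar_ball _ _ hδ, Measure.addHaar_ball _ _ hρ,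
          finrank_euclideanSpace_fin]

lemma muMeas_ball_upper (n : ℕ) (hn : 1 ≤ n) (θ : ℝ) (hθ : θ ∈ Set.Ioo (0 : ℝ) (1 / 2)) :
    ∃ C : ℝ≥0∞, C ≠ ⊤ ∧ ∀ (z : EuclideanSpace ℝ (Fin n)) (r : ℝ), 0 < r →
      muMeas n θ ((ball z r) ×ˢ (ball z r)) ≤ ENNReal.ofReal (r ^ ((n : ℝ) + 2 * θ)) * C := by
  set s : ℝ := (n : ℝ) - 2 * θ with hs_def
  have hn1 : (1 : ℝ) ≤ n := by exact_mod_cast hn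
  have hθ0 := hθ.1
  have hθ2 := hθ.2
  have hs_pos : 0 < s := by rw [hs_def]; nlinarith
  set v1 := volume (ball (0 : EuclideanSpace ℝ (Fin n)) 1) with hv1
  haveI : Nontrivial (EuclideanSpace ℝ (Fin n)) :=
    Module.nontrivial_of_finrank_pos (R := ℝ) (by rw [finrank_euclideanSpace_fin]; omega)
  set q : ℝ≥0∞ := ENNReal.ofReal ((2 : ℝ) ^ (-(2 * θ))) with hq_def
  have hq1 : q < 1 := by
    rw [hq_def, ← ENNReal.ofReal_one]
    exact ENNReal.ofReal_lt_ofReal_iff_of_nonneg (Real.rpow_nonneg (by norm_num) _) |>.2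
      (Real.rpow_lt_one_of_one_lt_of_neg one_lt_two (by nlinarith))
  refine ⟨ENNReal.ofReal ((2 : ℝ) ^ n) * (v1 * v1) * (1 - q)⁻¹, ?_, ?_⟩
  · refine ENNReal.mul_ne_top (ENNReal.mul_ne_top ENNReal.ofReal_ne_top
      (ENNReal.mul_ne_top measure_ball_lt_top.ne measure_ball_lt_top.ne)) ?_
    rw [ENNReal.inv_ne_top]
    simp only [ne_eq, tsub_eq_zero_iff_le]
    exact fun h => absurd hq1 (not_lt.2 h)
  intro z r hr
  rw [muMeas, withDensity_apply _ (measurableSet_ball.prod measurableSet_ball)]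
  set f : EuclideanSpace ℝ (Fin n) × EuclideanSpace ℝ (Fin n) → ℝ≥0∞ :=
    fun p => ENNReal.ofReal (dist p.1 p.2 ^ (-((n : ℝ) - 2 * θ))) with hf_def
  set S : ℕ → Set (EuclideanSpace ℝ (Fin n) × EuclideanSpace ℝ (Fin n)) := fun j =>
    {p | (2 * r / 2 ^ (j + 1) ≤ dist p.1 p.2 ∧ dist p.1 p.2 < 2 * r / 2 ^ j) ∧ p.2 ∈ ball z r}
    with hS_def
  set Z : Set (EuclideanSpace ℝ (Fin n) × EuclideanSpace ℝ (Fin n)) :=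
    {p | dist p.1 p.2 = 0} with hZ_def
  have hdistm : Measurable fun p : EuclideanSpace ℝ (Fin n) × EuclideanSpace ℝ (Fin n) =>
      dist p.1 p.2 := by fun_prop
  have hZm : MeasurableSet Z := hdistm (measurableSet_singleton 0)
  have hSm : ∀ j, MeasurableSet (S j) := by
    intro j
    refine MeasurableSet.inter (MeasurableSet.inter ?_ ?_) ?_
    · exact measurableSet_le measurable_const hdistm
    · exact measurableSet_lt hdistm measurable_const
    · exact measurable_snd measurableSet_ball
  have hcover : (ball z r) ×ˢ (ball z r) ⊆ Z ∪ ⋃ j, S j := by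
    rintro ⟨x, y⟩ ⟨hx, hy⟩
    by_cases hd : dist x y = 0
    · exact Or.inl hd
    · right
      have hd0 : 0 < dist x y := lt_of_le_of_ne dist_nonneg (Ne.symm hd)
      have hd2 : dist x y < 2 * r := by
        have h1 := dist_triangle x z y
        have h2 : dist x z < r := mem_ball.1 hx
        have h3 : dist z y < r := by rw [dist_comm]; exact mem_ball.1 hy
        linarith
      have hP : ∃ j : ℕ, 2 * r / 2 ^ (j + 1) ≤ dist x y := by
        obtain ⟨j, hj⟩ := pow_unbounded_of_one_lt (2 * r / dist x y) (one_lt_two (α := ℝ))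
        refine ⟨j, ?_⟩
        rw [div_le_iff₀ (by positivity)]
        rw [div_lt_iff₀ hd0] at hj
        have : (2 : ℝ) ^ j ≤ 2 ^ (j + 1) := by
          apply pow_le_pow_right₀ (by norm_num); omega
        nlinarith
      classical
      refine Set.mem_iUnion.2 ⟨Nat.find hP, ⟨⟨Nat.find_spec hP, ?_⟩, hy⟩⟩
      rcases Nat.eq_zero_or_pos (Nat.find hP) with hj0 | hjpos
      · rw [hj0]; simpa using hd2
      · have hmin := Nat.find_min hP (m := Nat.find hP - 1) (by omega)
        push_neg at hmin
        have : Nat.find hP - 1 + 1 = Nat.find hP := by omega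
        rwa [this] at hmin
  have hZ_zero : ∫⁻ p in Z, f p = 0 := by
    refine le_antisymm ?_ zero_le
    have : ∀ p ∈ Z, f p ≤ 0 := by
      intro p hp
      have : dist p.1 p.2 = 0 := hp
      rw [hf_def]
      simp only [this]
      rw [Real.zero_rpow (by intro h; rw [neg_eq_zero] at h; exact hs_pos.ne' h)]
      simp
    calc ∫⁻ p in Z, f p ≤ ∫⁻ _ in Z, 0 := setLIntegral_mono' hZm this
      _ = 0 := by simp
  have hterm : ∀ j : ℕ, ∫⁻ p in S j, f p ≤
      (ENNReal.ofReal (r ^ ((n : ℝ) + 2 * θ)) * (ENNReal.ofReal ((2 : ℝ) ^ n) * (v1 * v1)))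
        * q ^ j := by
    intro j
    have hX : (0 : ℝ) < r / 2 ^ j := by positivity
    have hXeq : 2 * r / 2 ^ (j + 1) = r / 2 ^ j := by
      rw [pow_succ]; ring
    have hbound : ∀ p ∈ S j, f p ≤ ENNReal.ofReal ((r / 2 ^ j) ^ (-s)) := by
      rintro p ⟨⟨h1, _⟩, _⟩
      rw [hXeq] at h1
      exact ENNReal.ofReal_le_ofReal
        (Real.rpow_le_rpow_of_nonpos hX h1 (by linarith))
    have hmeas_bound : volume (S j) ≤
        (ENNReal.ofReal ((2 * r / 2 ^ j) ^ n) * v1) * (ENNReal.ofReal (r ^ n) * v1) := by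
      refine le_trans (measure_mono ?_) (strip_bound n hn z (by positivity) hr.le)
      rintro p ⟨⟨_, h2⟩, h3⟩
      exact ⟨h2, h3⟩
    calc ∫⁻ p in S j, f p ≤ ∫⁻ _ in S j, ENNReal.ofReal ((r / 2 ^ j) ^ (-s)) :=
          setLIntegral_mono' (hSm j) hbound
      _ = ENNReal.ofReal ((r / 2 ^ j) ^ (-s)) * volume (S j) := setLIntegral_const _ _
      _ ≤ ENNReal.ofReal ((r / 2 ^ j) ^ (-s)) *
          ((ENNReal.ofReal ((2 * r / 2 ^ j) ^ n) * v1) * (ENNReal.ofReal (r ^ n) * v1)) :=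
          mul_le_mul_right hmeas_bound _
      _ = (ENNReal.ofReal (r ^ ((n : ℝ) + 2 * θ)) * (ENNReal.ofReal ((2 : ℝ) ^ n) * (v1 * v1)))
          * q ^ j := by
          rw [hq_def, ← ENNReal.ofReal_pow (Real.rpow_nonneg (by norm_num) _)]
          have hrn : r ^ (2 * θ) * r ^ n = r ^ ((n : ℝ) + 2 * θ) := by
            rw [← Real.rpow_natCast r n, ← Real.rpow_add hr]
            congr 1; ring
          have hreal : (r / 2 ^ j) ^ (-s) * ((2 * r / 2 ^ j) ^ n * r ^ n) =
              r ^ ((n : ℝ) + 2 * θ) * ((2 : ℝ) ^ n * ((2 : ℝ) ^ (-(2 * θ))) ^ j) := by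
            have hXn : ((r / 2 ^ j) : ℝ) ^ (-s) =
                (r / 2 ^ j) ^ (2 * θ) * ((r / 2 ^ j) ^ n)⁻¹ := by
              rw [← Real.rpow_natCast (r / 2 ^ j) n, ← Real.rpow_neg hX.le,
                ← Real.rpow_add hX]
              congr 1
              rw [hs_def]; ring
            rw [hXn]
            have h2X : (2 * r / 2 ^ j) ^ n = 2 ^ n * (r / 2 ^ j) ^ n := by
              rw [← mul_pow]; congr 1; ring
            rw [h2X]
            have hX2θ : ((r / 2 ^ j) : ℝ) ^ (2 * θ) =
                r ^ (2 * θ) * ((2 : ℝ) ^ (-(2 * θ))) ^ j := by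
              rw [Real.div_rpow hr.le (by positivity)]
              rw [← Real.rpow_natCast (2 : ℝ) j, ← Real.rpow_mul (by norm_num),
                ← Real.rpow_natCast ((2 : ℝ) ^ (-(2 * θ))) j, ← Real.rpow_mul (by norm_num)]
              rw [div_eq_mul_inv, ← Real.rpow_neg (by norm_num)]
              congr 1
              ring
            rw [hX2θ, ← hrn]
            have hne : ((r / 2 ^ j : ℝ) ^ n) ≠ 0 := (pow_pos hX n).ne'
            field_simp
          have hcollapse : ENNReal.ofReal ((r / 2 ^ j) ^ (-s)) *
              (ENNReal.ofReal ((2 * r / 2 ^ j) ^ n) * ENNReal.ofReal (r ^ n)) =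
              ENNReal.ofReal (r ^ ((n : ℝ) + 2 * θ)) * (ENNReal.ofReal ((2 : ℝ) ^ n) *
                ENNReal.ofReal (((2 : ℝ) ^ (-(2 * θ))) ^ j)) := by
            rw [← ENNReal.ofReal_mul (by positivity), ← ENNReal.ofReal_mul
              (Real.rpow_nonneg hX.le _), ← ENNReal.ofReal_mul (by positivity),
              ← ENNReal.ofReal_mul (Real.rpow_nonneg hr.le _)]
            exact congrArg ENNReal.ofReal hreal
          have hrearr : ENNReal.ofReal ((r / 2 ^ j) ^ (-s)) *
              (ENNReal.ofReal ((2 * r / 2 ^ j) ^ n) * v1 * (ENNReal.ofReal (r ^ n) * v1)) =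
              (ENNReal.ofReal ((r / 2 ^ j) ^ (-s)) * (ENNReal.ofReal ((2 * r / 2 ^ j) ^ n) *
                ENNReal.ofReal (r ^ n))) * (v1 * v1) := by ring
          rw [hrearr, hcollapse]
          ring
  calc ∫⁻ p in (ball z r) ×ˢ (ball z r), f p ≤ ∫⁻ p in Z ∪ ⋃ j, S j, f p :=
        lintegral_mono_set hcover
    _ ≤ (∫⁻ p in Z, f p) + ∫⁻ p in ⋃ j, S j, f p := lintegral_union_le _ _ _
    _ = ∫⁻ p in ⋃ j, S j, f p := by rw [hZ_zero, zero_add]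
    _ ≤ ∑' j, ∫⁻ p in S j, f p := lintegral_iUnion_le _ _
    _ ≤ ∑' j, (ENNReal.ofReal (r ^ ((n : ℝ) + 2 * θ)) *
          (ENNReal.ofReal ((2 : ℝ) ^ n) * (v1 * v1))) * q ^ j :=
        ENNReal.tsum_le_tsum hterm
    _ = (ENNReal.ofReal (r ^ ((n : ℝ) + 2 * θ)) *
          (ENNReal.ofReal ((2 : ℝ) ^ n) * (v1 * v1))) * (1 - q)⁻¹ := by
        rw [ENNReal.tsum_mul_left, ENNReal.tsum_geometric]
    _ = ENNReal.ofReal (r ^ ((n : ℝ) + 2 * θ)) *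
          (ENNReal.ofReal ((2 : ℝ) ^ n) * (v1 * v1) * (1 - q)⁻¹) := by ring

lemma muMeas_lower (n : ℕ) (hn : 1 ≤ n) (θ : ℝ) (hθ : θ ∈ Set.Ioo (0 : ℝ) (1 / 2))
    (k : ℕ) (a b : Fin n → ℕ) {r : ℝ} (hr : 0 < r)
    (hdist : ∀ x ∈ dyadicCube n k a, ∀ y ∈ dyadicCube n k b, dist x y ≤ r) :
    ENNReal.ofReal (r ^ (-((n : ℝ) - 2 * θ))) * ENNReal.ofReal (((1 / 2 ^ k : ℝ) ^ n) ^ 2) ≤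
      muMeas n θ ((dyadicCube n k a) ×ˢ (dyadicCube n k b)) := by
  haveI : NeZero n := ⟨by omega⟩
  have hKm : MeasurableSet ((dyadicCube n k a) ×ˢ (dyadicCube n k b)) :=
    (measurableSet_dyadicCube n k a).prod (measurableSet_dyadicCube n k b)
  rw [muMeas, withDensity_apply _ hKm]
  set f : EuclideanSpace ℝ (Fin n) × EuclideanSpace ℝ (Fin n) → ℝ≥0∞ :=
    fun p => ENNReal.ofReal (dist p.1 p.2 ^ (-((n : ℝ) - 2 * θ))) with hf_def
  set D : Set (EuclideanSpace ℝ (Fin n) × EuclideanSpace ℝ (Fin n)) :=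
    {p | dist p.1 p.2 = 0} with hD_def
  have hDm : MeasurableSet D := by
    have hdistm : Measurable fun p : EuclideanSpace ℝ (Fin n) × EuclideanSpace ℝ (Fin n) =>
        dist p.1 p.2 := by fun_prop
    exact hdistm (measurableSet_singleton 0)
  have hD0 : volume D = 0 := by
    have hEq : D = (fun p : EuclideanSpace ℝ (Fin n) × EuclideanSpace ℝ (Fin n) =>
        (p.1 - p.2, p.2)) ⁻¹' (({0} : Set (EuclideanSpace ℝ (Fin n))) ×ˢ Set.univ) := by
      ext p
      simp only [hD_def, Set.mem_setOf_eq, Set.mem_preimage, Set.mem_prod, Set.mem_singleton_iff,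
        Set.mem_univ, and_true, sub_eq_zero, dist_eq_zero]
    rw [hEq, Measure.volume_eq_prod]
    rw [(measurePreserving_sub_prod volume volume).measure_preimage
      (((measurableSet_singleton _).prod MeasurableSet.univ).nullMeasurableSet)]
    rw [Measure.prod_prod, measure_singleton, zero_mul]
  have hpt : ∀ p ∈ ((dyadicCube n k a) ×ˢ (dyadicCube n k b)) \ D,
      ENNReal.ofReal (r ^ (-((n : ℝ) - 2 * θ))) ≤ f p := by
    rintro ⟨x, y⟩ ⟨⟨hx, hy⟩, hD⟩
    have hdxy : dist x y ≤ r := hdist x hx y hy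
    have hd0 : 0 < dist x y := by
      rcases lt_or_eq_of_le (dist_nonneg (x := x) (y := y)) with h | h
      · exact h
      · exact absurd h.symm hD
    have hs_pos : 0 < (n : ℝ) - 2 * θ := by
      have hn1 : (1 : ℝ) ≤ n := by exact_mod_cast hn
      nlinarith [hθ.2]
    exact ENNReal.ofReal_le_ofReal
      (Real.rpow_le_rpow_of_nonpos hd0 hdxy (by linarith))
  calc ENNReal.ofReal (r ^ (-((n : ℝ) - 2 * θ))) * ENNReal.ofReal (((1 / 2 ^ k : ℝ) ^ n) ^ 2)
      = ENNReal.ofReal (r ^ (-((n : ℝ) - 2 * θ))) *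
        volume ((dyadicCube n k a) ×ˢ (dyadicCube n k b)) := by
        rw [Measure.volume_eq_prod, Measure.prod_prod, volume_dyadicCube, volume_dyadicCube,
          sq, ENNReal.ofReal_mul (by positivity)]
    _ = ENNReal.ofReal (r ^ (-((n : ℝ) - 2 * θ))) *
        volume (((dyadicCube n k a) ×ˢ (dyadicCube n k b)) \ D) := by
        rw [measure_diff_null hD0]
    _ = ∫⁻ _ in ((dyadicCube n k a) ×ˢ (dyadicCube n k b)) \ D,
        ENNReal.ofReal (r ^ (-((n : ℝ) - 2 * θ))) := (setLIntegral_const _ _).symm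
    _ ≤ ∫⁻ p in ((dyadicCube n k a) ×ˢ (dyadicCube n k b)) \ D, f p :=
        setLIntegral_mono' (hKm.diff hDm) hpt
    _ ≤ ∫⁻ p in (dyadicCube n k a) ×ˢ (dyadicCube n k b), f p :=
        lintegral_mono_set Set.diff_subset

/-- Near-diagonal dyadic cubes are absorbed by diagonal balls of comparable `μ`-measure:
there is `c = c(n,θ) > 0` such that for dyadic cubes `K₁, K₂ ⊂ Q₁` of sidelength `2^{-k}`
with `dist(K₁,K₂) < (3√n + 1) 2^{-k}`, letting `z` be the midpoint of their centers and
`r = (5√n + 1) 2^{-k}`, one has `K₁ × K₂ ⊂ B_r(z) × B_r(z)` and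
`μ(B_r(z) × B_r(z)) ≤ c (5√n + 1)^{2n} μ(K₁ × K₂)`. -/
theorem stmt_13 (n : ℕ) (hn : 1 ≤ n) (θ : ℝ) (hθ : θ ∈ Set.Ioo (0 : ℝ) (1 / 2)) :
    ∃ c : ℝ, 0 < c ∧
      ∀ (k : ℕ) (a b : Fin n → ℕ), (∀ t, a t < 2 ^ k) → (∀ t, b t < 2 ^ k) →
        setDist (dyadicCube n k a) (dyadicCube n k b) < (3 * Real.sqrt n + 1) / 2 ^ k →
        ∀ z : EuclideanSpace ℝ (Fin n),
          (∀ t, z t = (((a t : ℝ) + 1 / 2) / 2 ^ k + ((b t : ℝ) + 1 / 2) / 2 ^ k) / 2) →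
          dyadicCube n k a ×ˢ dyadicCube n k b ⊆
              (ball z ((5 * Real.sqrt n + 1) / 2 ^ k)) ×ˢ
                (ball z ((5 * Real.sqrt n + 1) / 2 ^ k)) ∧
            muMeas n θ
                ((ball z ((5 * Real.sqrt n + 1) / 2 ^ k)) ×ˢ
                  (ball z ((5 * Real.sqrt n + 1) / 2 ^ k))) ≤
              ENNReal.ofReal (c * (5 * Real.sqrt n + 1) ^ (2 * n)) *
                muMeas n θ (dyadicCube n k a ×ˢ dyadicCube n k b) := by
  obtain ⟨C, hCfin, hCup⟩ := muMeas_ball_upper n hn θ hθ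
  refine ⟨C.toReal + 1, by positivity, ?_⟩
  intro k a b ha hb hsep z hz
  have h2k : (0 : ℝ) < 2 ^ k := by positivity
  have hsqn : (0 : ℝ) ≤ Real.sqrt n := Real.sqrt_nonneg n
  set r : ℝ := (5 * Real.sqrt n + 1) / 2 ^ k with hr_def
  have hr : 0 < r := by positivity
  -- centers
  set ca : EuclideanSpace ℝ (Fin n) := WithLp.toLp 2 (fun t => ((a t : ℝ) + 1 / 2) / 2 ^ k) with hca
  set cb : EuclideanSpace ℝ (Fin n) := WithLp.toLp 2 (fun t => ((b t : ℝ) + 1 / 2) / 2 ^ k) with hcb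
  -- half-diameter bound
  have hhalf : ∀ (cc : Fin n → ℕ) (x : EuclideanSpace ℝ (Fin n)), x ∈ dyadicCube n k cc →
      dist x (WithLp.toLp 2 (fun t => ((cc t : ℝ) + 1 / 2) / 2 ^ k : Fin n → ℝ) :
        EuclideanSpace ℝ (Fin n)) ≤ Real.sqrt n * (1 / (2 * 2 ^ k)) := by
    intro cc x hx
    refine dist_le_of_coords n _ _ (by positivity) fun t => ?_
    obtain ⟨h1, h2⟩ := hx t
    have e1 : ((cc t : ℝ) + 1 / 2) / 2 ^ k = (cc t : ℝ) / 2 ^ k + 1 / (2 * 2 ^ k) := by ring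
    have e2 : ((cc t : ℝ) + 1) / 2 ^ k = (cc t : ℝ) / 2 ^ k + 2 * (1 / (2 * 2 ^ k)) := by ring
    show |x t - ((cc t : ℝ) + 1 / 2) / 2 ^ k| ≤ _
    rw [abs_le]
    constructor <;> [skip; skip] <;> rw [e1] <;> rw [e2] at h2 <;> linarith
  -- the centers are close
  have hcc : dist ca cb ≤ (4 * Real.sqrt n + 1) / 2 ^ k := by
    have hpa : (WithLp.toLp 2 (fun t => (a t : ℝ) / 2 ^ k : Fin n → ℝ) : EuclideanSpace ℝ (Fin n)) ∈
        dyadicCube n k a := by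
      intro t
      refine ⟨le_refl _, ?_⟩
      show (a t : ℝ) / 2 ^ k ≤ ((a t : ℝ) + 1) / 2 ^ k
      gcongr
      linarith
    have hpb : (WithLp.toLp 2 (fun t => (b t : ℝ) / 2 ^ k : Fin n → ℝ) : EuclideanSpace ℝ (Fin n)) ∈
        dyadicCube n k b := by
      intro t
      refine ⟨le_refl _, ?_⟩
      show (b t : ℝ) / 2 ^ k ≤ ((b t : ℝ) + 1) / 2 ^ k
      gcongr
      linarith
    have hne : {d | ∃ x ∈ dyadicCube n k a, ∃ y ∈ dyadicCube n k b, d = dist x y}.Nonempty :=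
      ⟨_, _, hpa, _, hpb, rfl⟩
    have hbdd : BddBelow {d | ∃ x ∈ dyadicCube n k a, ∃ y ∈ dyadicCube n k b, d = dist x y} := by
      refine ⟨0, ?_⟩
      rintro d ⟨x, _, y, _, rfl⟩
      exact dist_nonneg
    obtain ⟨d, ⟨x', hx', y', hy', rfl⟩, hdlt⟩ := (csInf_lt_iff hbdd hne).1 hsep
    have h1 := hhalf a x' hx'
    have h2 := hhalf b y' hy'
    have htri : dist ca cb ≤ dist ca x' + dist x' y' + dist y' cb := dist_triangle4 ca x' y' cb
    rw [dist_comm ca x'] at htri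
    have e3 : Real.sqrt n * (1 / (2 * 2 ^ k)) + (3 * Real.sqrt n + 1) / 2 ^ k +
        Real.sqrt n * (1 / (2 * 2 ^ k)) = (4 * Real.sqrt n + 1) / 2 ^ k := by ring
    have hca' : dist x' ca ≤ Real.sqrt n * (1 / (2 * 2 ^ k)) := h1
    have hcb' : dist y' cb ≤ Real.sqrt n * (1 / (2 * 2 ^ k)) := h2
    linarith
  -- z is the midpoint
  have hzmid : z = midpoint ℝ ca cb := by
    ext t
    rw [hz t]
    have : midpoint ℝ ca cb t = (ca t + cb t) / 2 := by
      simp [midpoint_eq_smul_add, PiLp.smul_apply, PiLp.add_apply, smul_eq_mul]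
      ring
    rw [this]
  have hzca : dist ca z ≤ (4 * Real.sqrt n + 1) / (2 * 2 ^ k) := by
    rw [hzmid, dist_comm, dist_midpoint_left]
    simp only [Real.norm_ofNat]
    rw [inv_mul_eq_div]
    calc dist ca cb / 2 ≤ ((4 * Real.sqrt n + 1) / 2 ^ k) / 2 := by linarith
      _ = (4 * Real.sqrt n + 1) / (2 * 2 ^ k) := by ring
  have hzcb : dist cb z ≤ (4 * Real.sqrt n + 1) / (2 * 2 ^ k) := by
    rw [hzmid, dist_comm, dist_midpoint_right]
    simp only [Real.norm_ofNat]
    rw [inv_mul_eq_div]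
    calc dist ca cb / 2 ≤ ((4 * Real.sqrt n + 1) / 2 ^ k) / 2 := by linarith
      _ = (4 * Real.sqrt n + 1) / (2 * 2 ^ k) := by ring
  have hxz : ∀ x ∈ dyadicCube n k a, dist x z ≤ r / 2 := by
    intro x hx
    have h1 := hhalf a x hx
    have htri := dist_triangle x ca z
    have e4 : Real.sqrt n * (1 / (2 * 2 ^ k)) + (4 * Real.sqrt n + 1) / (2 * 2 ^ k) = r / 2 := by
      rw [hr_def]; ring
    linarith
  have hyz : ∀ y ∈ dyadicCube n k b, dist y z ≤ r / 2 := by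
    intro y hy
    have h1 := hhalf b y hy
    have htri := dist_triangle y cb z
    have e4 : Real.sqrt n * (1 / (2 * 2 ^ k)) + (4 * Real.sqrt n + 1) / (2 * 2 ^ k) = r / 2 := by
      rw [hr_def]; ring
    linarith
  have hincl : dyadicCube n k a ×ˢ dyadicCube n k b ⊆ (ball z r) ×ˢ (ball z r) := by
    rintro ⟨x, y⟩ ⟨hx, hy⟩
    exact ⟨mem_ball.2 (lt_of_le_of_lt (hxz x hx) (by linarith)),
      mem_ball.2 (lt_of_le_of_lt (hyz y hy) (by linarith))⟩
  refine ⟨hincl, ?_⟩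
  have hdist : ∀ x ∈ dyadicCube n k a, ∀ y ∈ dyadicCube n k b, dist x y ≤ r := by
    intro x hx y hy
    have := dist_triangle x z y
    have h2 := hyz y hy
    rw [dist_comm z y] at this
    have h1 := hxz x hx
    linarith
  -- the upper and lower bounds
  have hCle : C ≤ ENNReal.ofReal (C.toReal + 1) :=
    calc C = ENNReal.ofReal C.toReal := (ENNReal.ofReal_toReal hCfin).symm
      _ ≤ ENNReal.ofReal (C.toReal + 1) :=
        ENNReal.ofReal_le_ofReal (by linarith [ENNReal.toReal_nonneg (a := C)])
  have hkey : ENNReal.ofReal (r ^ ((n : ℝ) + 2 * θ)) * ENNReal.ofReal (C.toReal + 1) ≤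
      ENNReal.ofReal ((C.toReal + 1) * (5 * Real.sqrt n + 1) ^ (2 * n)) *
        (ENNReal.ofReal (r ^ (-((n : ℝ) - 2 * θ))) *
          ENNReal.ofReal (((1 / 2 ^ k : ℝ) ^ n) ^ 2)) := by
    rw [← ENNReal.ofReal_mul (Real.rpow_nonneg hr.le _),
      ← ENNReal.ofReal_mul (Real.rpow_nonneg (by positivity) _),
      ← ENNReal.ofReal_mul (by positivity)]
    apply ENNReal.ofReal_le_ofReal
    have h1 : r ^ ((n : ℝ) + 2 * θ) = r ^ (-((n : ℝ) - 2 * θ)) * r ^ (2 * n) := by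
      rw [← Real.rpow_natCast r (2 * n), ← Real.rpow_add hr]
      congr 1
      push_cast
      ring
    have h2 : r ^ (2 * n) = (5 * Real.sqrt n + 1) ^ (2 * n) * ((1 / 2 ^ k : ℝ) ^ n) ^ 2 := by
      have : r = (5 * Real.sqrt n + 1) * (1 / 2 ^ k) := by rw [hr_def]; ring
      rw [this, mul_pow, ← pow_mul]
      congr 1
      ring
    rw [h1, h2]
    ring_nf
    exact le_refl _
  calc muMeas n θ ((ball z r) ×ˢ (ball z r)) ≤ ENNReal.ofReal (r ^ ((n : ℝ) + 2 * θ)) * C :=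
        hCup z r hr
    _ ≤ ENNReal.ofReal (r ^ ((n : ℝ) + 2 * θ)) * ENNReal.ofReal (C.toReal + 1) :=
        mul_le_mul_right hCle _
    _ ≤ ENNReal.ofReal ((C.toReal + 1) * (5 * Real.sqrt n + 1) ^ (2 * n)) *
        (ENNReal.ofReal (r ^ (-((n : ℝ) - 2 * θ))) *
          ENNReal.ofReal (((1 / 2 ^ k : ℝ) ^ n) ^ 2)) := hkey
    _ ≤ ENNReal.ofReal ((C.toReal + 1) * (5 * Real.sqrt n + 1) ^ (2 * n)) *
        muMeas n θ (dyadicCube n k a ×ˢ dyadicCube n k b) :=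
        mul_le_mul_right (muMeas_lower n hn θ hθ k a b hr hdist) _
end

section
/- Let F ∈ L¹_loc(ℝ^{2n}, μ) be nonnegative, and let x, y ∈ B_{r/2}(x₀) for some x₀ ∈ ℝⁿ and r > 0. Then 𝓜_{≥r}(F)(x,x) ≤ 3^{n+2θ} 𝓜(F)(x,y), where 𝓜_{≥r}(F)(x,x) = sup_{ρ ≥ r} ⨍_{𝓑_ρ(x,x)} F dμ and 𝓜(F)(x,y) = sup_{ρ>0} ⨍_{𝓑_ρ(x,y)} F dμ. -/
open MeasureTheory Metric ENNReal
open Set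

lemma muMeas_scale (n : ℕ) (θ : ℝ) (x : EuclideanSpace ℝ (Fin n)) (ρ : ℝ) :
    muMeas n θ (ball x (3 * ρ) ×ˢ ball x (3 * ρ)) =
      ENNReal.ofReal ((3 : ℝ) ^ ((n : ℝ) + 2 * θ)) * muMeas n θ (ball x ρ ×ˢ ball x ρ) := by
  haveI : Measure.IsAddHaarMeasure
      (volume : Measure (EuclideanSpace ℝ (Fin n) × EuclideanSpace ℝ (Fin n))) :=
    Measure.prod.instIsAddHaarMeasure _ _
  set e : ℝ := -((n : ℝ) - 2 * θ) with he
  set g : EuclideanSpace ℝ (Fin n) × EuclideanSpace ℝ (Fin n) → ℝ≥0∞ :=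
    fun p => ENNReal.ofReal (dist p.1 p.2 ^ e) with hgdef
  have hg_meas : Measurable g :=
    ENNReal.measurable_ofReal.comp
      (Measurable.pow (continuous_fst.dist continuous_snd).measurable measurable_const)
  set z : EuclideanSpace ℝ (Fin n) × EuclideanSpace ℝ (Fin n) := (x, x) with hz
  set b : EuclideanSpace ℝ (Fin n) × EuclideanSpace ℝ (Fin n) := z - (3 : ℝ) • z with hb
  set m : EuclideanSpace ℝ (Fin n) × EuclideanSpace ℝ (Fin n) →
      EuclideanSpace ℝ (Fin n) × EuclideanSpace ℝ (Fin n) :=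
    fun w => (3 : ℝ) • w + b with hm
  have hm_meas : Measurable m := (measurable_const_smul (3:ℝ)).add_const b
  have hdist : ∀ w, dist (m w) z = 3 * dist w z := by
    intro w
    have h : m w - z = (3 : ℝ) • (w - z) := by
      simp only [hm, hb]; module
    rw [dist_eq_norm, h, norm_smul, ← dist_eq_norm]
    simp [Real.norm_eq_abs]
  have hm_ball : m ⁻¹' (ball z (3 * ρ)) = ball z ρ := by
    ext w
    simp only [mem_preimage, mem_ball, hdist]
    constructor <;> intro h <;> nlinarith
  have hg_scale : ∀ w, g (m w) = ENNReal.ofReal ((3:ℝ) ^ e) * g w := by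
    intro w
    have h1 : dist (m w).1 (m w).2 = 3 * dist w.1 w.2 := by
      have h : (m w).1 - (m w).2 = (3 : ℝ) • (w.1 - w.2) := by
        simp only [hm, hb, hz, Prod.fst_add, Prod.snd_add, Prod.smul_fst, Prod.smul_snd,
          Prod.fst_sub, Prod.snd_sub]
        module
      rw [dist_eq_norm, h, norm_smul, ← dist_eq_norm]
      simp [Real.norm_eq_abs]
    simp only [hgdef, h1]
    rw [Real.mul_rpow (by norm_num) dist_nonneg,
      ENNReal.ofReal_mul (Real.rpow_nonneg (by norm_num) _)]
  have hSρ : MeasurableSet (ball z ρ) := measurableSet_ball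
  have hS3 : MeasurableSet (ball z (3 * ρ)) := measurableSet_ball
  have key : ∫⁻ w, (ball z (3*ρ)).indicator g (m w) =
      ENNReal.ofReal ((3:ℝ) ^ e) * ∫⁻ w in ball z ρ, g w := by
    have h : ∀ w, (ball z (3*ρ)).indicator g (m w)
        = ENNReal.ofReal ((3:ℝ) ^ e) * (ball z ρ).indicator g w := by
      intro w
      by_cases hw : w ∈ ball z ρ
      · have hw' : m w ∈ ball z (3*ρ) := by rw [← hm_ball] at hw; exact hw
        rw [indicator_of_mem hw', indicator_of_mem hw, hg_scale]
      · have hw' : m w ∉ ball z (3*ρ) := by rw [← hm_ball] at hw; exact hw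
        rw [indicator_of_notMem hw', indicator_of_notMem hw, mul_zero]
    simp_rw [h]
    rw [lintegral_const_mul _ (hg_meas.indicator hSρ), lintegral_indicator hSρ]
  have hfr : Module.finrank ℝ (EuclideanSpace ℝ (Fin n) × EuclideanSpace ℝ (Fin n)) = 2 * n := by
    rw [Module.finrank_prod, finrank_euclideanSpace, Fintype.card_fin]; ring
  have key2 : ∫⁻ w, (ball z (3*ρ)).indicator g (m w) =
      ENNReal.ofReal (((3:ℝ) ^ (2 * n))⁻¹) * ∫⁻ w in ball z (3*ρ), g w := by
    have hmap : Measure.map m volume = ENNReal.ofReal (((3:ℝ) ^ (2 * n))⁻¹) • volume := by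
      have hcomp : m = (fun v => v + b) ∘ (fun w => (3:ℝ) • w) := rfl
      rw [hcomp, ← Measure.map_map (measurable_add_const b) (measurable_const_smul (3:ℝ)),
        Measure.map_addHaar_smul volume (by norm_num : (3:ℝ) ≠ 0),
        Measure.map_smul, map_add_right_eq_self, hfr, abs_of_nonneg (by positivity)]
    calc ∫⁻ w, (ball z (3*ρ)).indicator g (m w)
        = ∫⁻ v, (ball z (3*ρ)).indicator g v ∂(Measure.map m volume) :=
          (lintegral_map (hg_meas.indicator hS3) hm_meas).symm
      _ = ENNReal.ofReal (((3:ℝ) ^ (2 * n))⁻¹) * ∫⁻ v, (ball z (3*ρ)).indicator g v := by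
          rw [hmap, lintegral_smul_measure, smul_eq_mul]
      _ = _ := by rw [lintegral_indicator hS3]
  have hμ3 : muMeas n θ (ball x (3*ρ) ×ˢ ball x (3*ρ)) = ∫⁻ w in ball z (3*ρ), g w := by
    rw [muMeas, ball_prod_same x x, withDensity_apply _ hS3]
  have hμρ : muMeas n θ (ball x ρ ×ˢ ball x ρ) = ∫⁻ w in ball z ρ, g w := by
    rw [muMeas, ball_prod_same x x, withDensity_apply _ hSρ]
  rw [hμ3, hμρ]
  have heq := key.symm.trans key2
  have h3d : (0:ℝ) < (3:ℝ) ^ (2 * n) := by positivity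
  have hkinv : ENNReal.ofReal (((3:ℝ) ^ (2 * n))⁻¹) = (ENNReal.ofReal ((3:ℝ) ^ (2*n)))⁻¹ :=
    ENNReal.ofReal_inv_of_pos h3d
  have hne0 : ENNReal.ofReal ((3:ℝ) ^ (2*n)) ≠ 0 := by
    simp [ENNReal.ofReal_eq_zero, not_le, h3d]
  have hnetop : ENNReal.ofReal ((3:ℝ) ^ (2*n)) ≠ ⊤ := ENNReal.ofReal_ne_top
  have hfin := congrArg (fun t => ENNReal.ofReal ((3:ℝ) ^ (2*n)) * t) heq
  simp only [hkinv, ← mul_assoc, ENNReal.mul_inv_cancel hne0 hnetop, one_mul] at hfin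
  rw [← hfin]
  congr 1
  rw [← ENNReal.ofReal_mul (by positivity)]
  congr 1
  rw [← Real.rpow_natCast (3:ℝ) (2*n), ← Real.rpow_add (by norm_num)]
  congr 1
  push_cast
  rw [he]; ring

/-- For nonnegative `F ∈ L¹_loc(ℝ^{2n}, μ)` and `x, y ∈ B_{r/2}(x₀)`, the restricted diagonal
maximal function satisfies `𝓜_{≥r}(F)(x,x) ≤ 3^{n+2θ} 𝓜(F)(x,y)`. -/
theorem stmt_16 (n : ℕ) (hn : 1 ≤ n) (θ : ℝ) (hθ : θ ∈ Set.Ioo (0 : ℝ) (1 / 2))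
    (F : EuclideanSpace ℝ (Fin n) × EuclideanSpace ℝ (Fin n) → ℝ)
    (hFnn : ∀ z, 0 ≤ F z) (hF : LocallyIntegrable F (muMeas n θ))
    (x₀ : EuclideanSpace ℝ (Fin n)) (r : ℝ) (hr : 0 < r)
    (x y : EuclideanSpace ℝ (Fin n)) (hx : x ∈ ball x₀ (r / 2)) (hy : y ∈ ball x₀ (r / 2)) :
    (⨆ (ρ : ℝ) (_ : r ≤ ρ),
        (muMeas n θ ((ball x ρ) ×ˢ (ball x ρ)))⁻¹ *
          ∫⁻ w in (ball x ρ) ×ˢ (ball x ρ), ENNReal.ofReal (F w) ∂(muMeas n θ)) ≤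
      ENNReal.ofReal ((3 : ℝ) ^ ((n : ℝ) + 2 * θ)) *
        ⨆ (ρ : ℝ) (_ : 0 < ρ),
          (muMeas n θ ((ball x ρ) ×ˢ (ball y ρ)))⁻¹ *
            ∫⁻ w in (ball x ρ) ×ˢ (ball y ρ), ENNReal.ofReal (F w) ∂(muMeas n θ) := by
  set K := ENNReal.ofReal ((3 : ℝ) ^ ((n : ℝ) + 2 * θ)) with hK
  have hK0 : K ≠ 0 := by
    simp [hK, ENNReal.ofReal_eq_zero, not_le, Real.rpow_pos_of_pos (by norm_num : (0:ℝ) < 3)]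
  have hKtop : K ≠ ⊤ := ENNReal.ofReal_ne_top
  refine iSup₂_le fun ρ hρ => ?_
  have hρ0 : 0 < ρ := lt_of_lt_of_le hr hρ
  have hxy : dist x y ≤ ρ := by
    have h1 : dist x x₀ < r / 2 := mem_ball.mp hx
    have h2 : dist y x₀ < r / 2 := mem_ball.mp hy
    have := dist_triangle x x₀ y
    rw [dist_comm x₀ y] at this
    linarith
  set A := ball x ρ ×ˢ ball x ρ
  set B := ball x (2 * ρ) ×ˢ ball y (2 * ρ)
  have hAB : A ⊆ B :=
    Set.prod_mono (ball_subset_ball (by linarith)) (ball_subset_ball' (by linarith))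
  have hBC : B ⊆ ball x (3 * ρ) ×ˢ ball x (3 * ρ) :=
    Set.prod_mono (ball_subset_ball (by linarith))
      (ball_subset_ball' (by rw [dist_comm y x]; linarith))
  have hμB : muMeas n θ B ≤ K * muMeas n θ A :=
    (measure_mono hBC).trans (le_of_eq (muMeas_scale n θ x ρ))
  have hinv : (muMeas n θ A)⁻¹ ≤ K * (muMeas n θ B)⁻¹ := by
    by_cases hA0 : muMeas n θ A = 0
    · have hB0 : muMeas n θ B = 0 := by
        refine le_antisymm ?_ zero_le
        calc muMeas n θ B ≤ K * muMeas n θ A := hμB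
          _ = 0 := by rw [hA0, mul_zero]
      simp [hA0, hB0, ENNReal.mul_top hK0]
    · calc (muMeas n θ A)⁻¹ = K * K⁻¹ * (muMeas n θ A)⁻¹ := by
            rw [ENNReal.mul_inv_cancel hK0 hKtop, one_mul]
        _ = K * (K * muMeas n θ A)⁻¹ := by
            rw [mul_assoc, ENNReal.mul_inv (Or.inl hK0) (Or.inl hKtop)]
        _ ≤ K * (muMeas n θ B)⁻¹ := mul_le_mul_right (ENNReal.inv_le_inv' hμB) K
  calc (muMeas n θ A)⁻¹ * ∫⁻ w in A, ENNReal.ofReal (F w) ∂(muMeas n θ)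
      ≤ (muMeas n θ A)⁻¹ * ∫⁻ w in B, ENNReal.ofReal (F w) ∂(muMeas n θ) :=
        mul_le_mul_right (lintegral_mono_set hAB) _
    _ ≤ (K * (muMeas n θ B)⁻¹) * ∫⁻ w in B, ENNReal.ofReal (F w) ∂(muMeas n θ) :=
        mul_le_mul_left hinv _
    _ = K * ((muMeas n θ B)⁻¹ * ∫⁻ w in B, ENNReal.ofReal (F w) ∂(muMeas n θ)) := mul_assoc _ _ _
    _ ≤ K * ⨆ (ρ' : ℝ) (_ : 0 < ρ'),
          (muMeas n θ ((ball x ρ') ×ˢ (ball y ρ')))⁻¹ *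
            ∫⁻ w in (ball x ρ') ×ˢ (ball y ρ'), ENNReal.ofReal (F w) ∂(muMeas n θ) :=
        mul_le_mul_right (le_iSup₂_of_le (2 * ρ) (by linarith) le_rfl) K
end
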